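/- arXiv:2206.05858 — 4 statements merged into one kernel-verified Lean document; each statement's English description precedes it below -/
import Mathlib

section
/- The family of altered Legendre polynomials {A_n : n ≥ 1} is total in L²(0,1): the linear span of the functions A_n restricted to [0,1] is dense in L²(0,1). -/
open Polynomial MeasureTheory Real Filter

/-- The Legendre polynomial of degree `n`, via the Rodrigues formula
`P_n(x) = 1/(2^n n!) dⁿ/dxⁿ (x² - 1)ⁿ`. -/
noncomputable def legendre (n : ℕ) : Polynomial ℝ :=
  (1 / (2 ^ n * n.factorial) : ℝ) • derivative^[n] ((X ^ 2 - 1) ^ n)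

/-- The shifted Legendre polynomial `P̃_n(x) = P_n(2x - 1)` on `[0,1]`. -/
noncomputable def shiftedLegendre (n : ℕ) (x : ℝ) : ℝ :=
  (legendre n).eval (2 * x - 1)

/-- The altered Legendre polynomial `A_n(x) = ((x+1)/2) P̃_{n-1}(x)` for `n ≥ 1`. -/
noncomputable def alteredLegendre (n : ℕ) (x : ℝ) : ℝ :=
  ((x + 1) / 2) * shiftedLegendre (n - 1) x

lemma legendre_coeff_ne (n : ℕ) : (legendre n).coeff n ≠ 0 := by
  have hm : (X ^ 2 - 1 : ℝ[X]).Monic := by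
    simpa using monic_X_pow_sub_C (1 : ℝ) two_ne_zero
  have hq : ((X ^ 2 - 1 : ℝ[X]) ^ n).natDegree = 2 * n := by
    rw [natDegree_pow]
    have : (X ^ 2 - 1 : ℝ[X]).natDegree = 2 := by
      simpa using natDegree_X_pow_sub_C (R := ℝ) (n := 2) (r := 1)
    rw [this]; ring
  have hcoeff : ((X ^ 2 - 1 : ℝ[X]) ^ n).coeff (n + n) = 1 := by
    have : n + n = 2 * n := by ring
    rw [this, ← hq]
    exact (hm.pow n).coeff_natDegree
  have hD : (derivative^[n] ((X ^ 2 - 1 : ℝ[X]) ^ n)).coeff n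
      = ((n + n).descFactorial n : ℝ) := by
    rw [coeff_iterate_derivative, hcoeff, nsmul_eq_mul, mul_one]
  have hc : (1 / (2 ^ n * n.factorial : ℝ)) ≠ 0 := by positivity
  have hd : ((n + n).descFactorial n : ℝ) ≠ 0 := by
    intro h
    exact absurd (Nat.descFactorial_eq_zero_iff_lt.mp (by exact_mod_cast h)) (by omega)
  simp only [legendre, coeff_smul, smul_eq_mul, hD]
  exact mul_ne_zero hc hd

lemma legendre_natDegree (n : ℕ) : (legendre n).natDegree = n := by
  refine le_antisymm ?_ (le_natDegree_of_ne_zero (legendre_coeff_ne n))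
  refine (natDegree_smul_le _ _).trans ?_
  refine (natDegree_iterate_derivative _ _).trans ?_
  have hq : ((X ^ 2 - 1 : ℝ[X]) ^ n).natDegree = 2 * n := by
    rw [natDegree_pow]
    have : (X ^ 2 - 1 : ℝ[X]).natDegree = 2 := by
      simpa using natDegree_X_pow_sub_C (R := ℝ) (n := 2) (r := 1)
    rw [this]; ring
  rw [hq]; omega

/-- The shifted Legendre polynomial as a polynomial. -/
noncomputable def legS (n : ℕ) : ℝ[X] := (legendre n).comp (C 2 * X - 1)

lemma natDegree_linear' : (C (2:ℝ) * X - 1).natDegree = 1 := by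
  have : (C (2:ℝ) * X - 1) = C 2 * X + C (-1) := by
    simp [sub_eq_add_neg, map_neg]
  rw [this]
  exact natDegree_linear two_ne_zero

lemma legS_natDegree (n : ℕ) : (legS n).natDegree = n := by
  rw [legS, natDegree_comp, natDegree_linear', legendre_natDegree, mul_one]

lemma legS_ne_zero (n : ℕ) : legS n ≠ 0 := by
  have h1 : (C (2:ℝ) * X - 1).natDegree ≠ 0 := by rw [natDegree_linear']; omega
  have := leadingCoeff_comp (p := legendre n) h1
  intro h
  rw [legS] at h
  rw [h, leadingCoeff_zero] at this
  have hl : (legendre n).leadingCoeff ≠ 0 := by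
    rw [leadingCoeff, legendre_natDegree]; exact legendre_coeff_ne n
  have hl2 : (C (2:ℝ) * X - 1).leadingCoeff ≠ 0 :=
    leadingCoeff_ne_zero.mpr (fun h => by simp [h] at h1)
  exact (mul_ne_zero hl (pow_ne_zero _ hl2)) this.symm

lemma legS_zero : legS 0 = 1 := by
  have : legendre 0 = 1 := by
    simp [legendre]
  simp [legS, this]

lemma mem_span_legS (p : ℝ[X]) : p ∈ Submodule.span ℝ (Set.range legS) := by
  suffices h : ∀ (N : ℕ) (p : ℝ[X]), p.natDegree ≤ N →
      p ∈ Submodule.span ℝ (Set.range legS) from h p.natDegree p le_rfl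
  intro N
  induction N with
  | zero =>
    intro p hp
    rw [eq_C_of_natDegree_le_zero hp]
    have : C (p.coeff 0) = (p.coeff 0) • legS 0 := by rw [legS_zero]; simp [smul_eq_C_mul]
    rw [this]
    exact Submodule.smul_mem _ _ (Submodule.subset_span ⟨0, rfl⟩)
  | succ N ih =>
    intro p hp
    by_cases h : p.natDegree ≤ N
    · exact ih p h
    have hd : p.natDegree = N + 1 := by omega
    set c : ℝ := p.coeff (N + 1) / (legS (N + 1)).coeff (N + 1) with hc
    have hlead : (legS (N + 1)).coeff (N + 1) ≠ 0 := by
      have := leadingCoeff_ne_zero.mpr (legS_ne_zero (N + 1))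
      rwa [leadingCoeff, legS_natDegree] at this
    have hr : (p - c • legS (N + 1)).natDegree ≤ N := by
      rw [natDegree_le_iff_coeff_eq_zero]
      intro M hM
      rcases eq_or_lt_of_le (Nat.succ_le_of_lt hM) with h1 | h1
      · simp only [coeff_sub, coeff_smul, smul_eq_mul, ← h1, hc]
        rw [div_mul_cancel₀ _ hlead, sub_self]
      · have h2 : p.natDegree < M := by omega
        have h3 : (legS (N + 1)).natDegree < M := by rw [legS_natDegree]; omega
        simp [coeff_sub, coeff_smul, coeff_eq_zero_of_natDegree_lt h2,
          coeff_eq_zero_of_natDegree_lt h3]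
    have := ih _ hr
    have hmem : c • legS (N + 1) ∈ Submodule.span ℝ (Set.range legS) :=
      Submodule.smul_mem _ _ (Submodule.subset_span ⟨N + 1, rfl⟩)
    have : p = (p - c • legS (N + 1)) + c • legS (N + 1) := by ring
    rw [this]
    exact Submodule.add_mem _ (ih _ hr) hmem
lemma alteredLegendre_eq (k : ℕ) (x : ℝ) :
    alteredLegendre (k + 1) x = (C (1/2 : ℝ) * (X + 1) * legS k).eval x := by
  rw [alteredLegendre, Nat.add_sub_cancel, _root_.shiftedLegendre, legS]
  rw [eval_mul, eval_mul, eval_C, eval_add, eval_X, eval_one, eval_comp]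
  simp only [eval_sub, eval_mul, eval_C, eval_X, eval_one]
  ring

/-- The altered Legendre polynomials `{A_n : n ≥ 1}` are total in `L²(0,1)`. -/
theorem alteredLegendre_total :
    Dense (↑(Submodule.span ℝ
      {f : Lp ℝ 2 (volume.restrict (Set.Ioo (0:ℝ) 1)) |
        ∃ n : ℕ, 1 ≤ n ∧
          (f : ℝ → ℝ) =ᵐ[volume.restrict (Set.Ioo (0:ℝ) 1)] alteredLegendre n}) :
      Set (Lp ℝ 2 (volume.restrict (Set.Ioo (0:ℝ) 1)))) := by
  set μ := volume.restrict (Set.Ioo (0:ℝ) 1) with hμ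
  haveI : IsFiniteMeasure μ := by
    constructor
    rw [hμ, Measure.restrict_apply_univ]
    simp [Real.volume_Ioo]
  set S := {f : Lp ℝ 2 μ |
    ∃ n : ℕ, 1 ≤ n ∧ (f : ℝ → ℝ) =ᵐ[μ] alteredLegendre n} with hS
  rw [Submodule.dense_iff_topologicalClosure_eq_top,
    Submodule.topologicalClosure_eq_top_iff, Submodule.eq_bot_iff]
  intro g hg
  set G : ℝ → ℝ := (g : ℝ → ℝ) with hG
  have hGint : Integrable G μ := (Lp.memLp g).integrable one_le_two
  -- a.e. bound for continuous functions
  have hbd : ∀ (F : ℝ → ℝ), Continuous F → ∃ C : ℝ, ∀ᵐ x ∂μ, ‖F x‖ ≤ C := by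
    intro F hF
    obtain ⟨x₀, -, hx₀⟩ := (isCompact_Icc (a := (0:ℝ)) (b := 1)).exists_isMaxOn
      (Set.nonempty_Icc.mpr zero_le_one) (continuous_norm.comp hF).continuousOn
    refine ⟨‖F x₀‖, ?_⟩
    filter_upwards [ae_restrict_mem measurableSet_Ioo] with x hx
    exact hx₀ (Set.Ioo_subset_Icc_self hx)
  have hint : ∀ (F : ℝ → ℝ), Continuous F → Integrable (fun x => F x * G x) μ := by
    intro F hF
    obtain ⟨C, hC⟩ := hbd F hF
    exact hGint.bdd_mul hF.aestronglyMeasurable hC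
  -- orthogonality against altered Legendre polynomials
  have horth : ∀ k : ℕ, ∫ x, (C (1/2 : ℝ) * (X + 1) * legS k).eval x * G x ∂μ = 0 := by
    intro k
    have hcont : Continuous (alteredLegendre (k + 1)) := by
      have : alteredLegendre (k + 1) =
          fun x => (C (1/2 : ℝ) * (X + 1) * legS k).eval x := by
        funext x; exact alteredLegendre_eq k x
      rw [this]
      exact (C (1/2 : ℝ) * (X + 1) * legS k).continuous_aeval
    obtain ⟨C₀, hC₀⟩ := hbd _ hcont
    have hmem : MemLp (alteredLegendre (k + 1)) 2 μ :=
      MemLp.of_bound hcont.aestronglyMeasurable C₀ hC₀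
    set f : Lp ℝ 2 μ := hmem.toLp _ with hf
    have hfS : f ∈ S := ⟨k + 1, le_add_self, hmem.coeFn_toLp⟩
    have := (Submodule.mem_orthogonal _ g).mp hg f (Submodule.subset_span hfS)
    rw [MeasureTheory.L2.inner_def] at this
    have heq : ∀ᵐ x ∂μ, (inner ℝ (f x) (g x) : ℝ)
        = (C (1/2 : ℝ) * (X + 1) * legS k).eval x * G x := by
      filter_upwards [hmem.coeFn_toLp] with x hx
      rw [RCLike.inner_apply, starRingEnd_apply, star_trivial]
      rw [hx, alteredLegendre_eq, mul_comm]
    rwa [integral_congr_ae heq] at this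
  -- extend to all polynomials by linearity
  have hall : ∀ p : ℝ[X], ∫ x, (C (1/2 : ℝ) * (X + 1) * p).eval x * G x ∂μ = 0 := by
    intro p
    have hsp := mem_span_legS p
    induction hsp using Submodule.span_induction with
    | mem q hq => obtain ⟨k, rfl⟩ := hq; exact horth k
    | zero => simp
    | add q r hq hr ihq ihr =>
      have hq' : Continuous fun x => (C (1/2 : ℝ) * (X + 1) * q).eval x :=
        Polynomial.continuous_aeval _
      have hr' : Continuous fun x => (C (1/2 : ℝ) * (X + 1) * r).eval x :=
        Polynomial.continuous_aeval _
      have : (fun x => (C (1/2 : ℝ) * (X + 1) * (q + r)).eval x * G x)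
          = fun x => (C (1/2 : ℝ) * (X + 1) * q).eval x * G x
              + (C (1/2 : ℝ) * (X + 1) * r).eval x * G x := by
        funext x; simp [mul_add, add_mul]
      rw [this, integral_add (hint _ hq') (hint _ hr'), ihq, ihr, add_zero]
    | smul a q hq ihq =>
      have : (fun x => (C (1/2 : ℝ) * (X + 1) * (a • q)).eval x * G x)
          = fun x => a * ((C (1/2 : ℝ) * (X + 1) * q).eval x * G x) := by
        funext x; simp [smul_eq_C_mul]; ring
      rw [this, integral_const_mul, ihq, mul_zero]
  -- the weighted function H
  set H : ℝ → ℝ := fun x => ((x + 1) / 2) * G x with hH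
  have hHint : Integrable H μ := hint _ (by fun_prop)
  have hpolyH : ∀ p : ℝ[X], ∫ x, p.eval x * H x ∂μ = 0 := by
    intro p
    have := hall p
    have heq : (fun x => (C (1/2 : ℝ) * (X + 1) * p).eval x * G x)
        = fun x => p.eval x * H x := by
      funext x; simp [hH]; ring
    rwa [heq] at this
  -- H vanishes a.e. by testing against smooth functions
  have hHzero : ∀ᵐ x ∂μ, H x = 0 := by
    apply ae_eq_zero_of_integral_contDiff_smul_eq_zero hHint.locallyIntegrable
    intro φ hφ hφc
    have hφcont : Continuous φ := hφ.continuous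
    have hIφ : Integrable (fun x => φ x * H x) μ := by
      have : (fun x => φ x * H x) = fun x => (φ x * ((x + 1) / 2)) * G x := by
        funext x; simp [hH]; ring
      rw [this]
      exact hint _ (by fun_prop)
    simp only [smul_eq_mul]
    set I := ∫ x, φ x * H x ∂μ with hI
    set cH := ∫ x, ‖H x‖ ∂μ with hcH
    have hcH0 : 0 ≤ cH := integral_nonneg fun x => norm_nonneg _
    have key : ∀ ε : ℝ, 0 < ε → |I| ≤ ε * cH := by
      intro ε hε
      obtain ⟨p, hp⟩ := exists_polynomial_near_of_continuousOn 0 1 φ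
        hφcont.continuousOn ε hε
      have hIp : Integrable (fun x => p.eval x * H x) μ := by
        have : (fun x => p.eval x * H x) = fun x => (p.eval x * ((x + 1) / 2)) * G x := by
          funext x; simp [hH]; ring
        rw [this]
        exact hint _ (by fun_prop)
      have hsub : I = ∫ x, (φ x - p.eval x) * H x ∂μ := by
        have : (fun x => (φ x - p.eval x) * H x)
            = fun x => φ x * H x - p.eval x * H x := by funext x; ring
        rw [this, integral_sub hIφ hIp, hpolyH p, sub_zero]
      rw [hsub]
      calc |∫ x, (φ x - p.eval x) * H x ∂μ| ≤ ∫ x, ‖(φ x - p.eval x) * H x‖ ∂μ :=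
            by rw [← Real.norm_eq_abs]; exact norm_integral_le_integral_norm _
        _ ≤ ∫ x, ε * ‖H x‖ ∂μ := by
            have hIsub : Integrable (fun x => (φ x - p.eval x) * H x) μ := by
              have : (fun x => (φ x - p.eval x) * H x)
                  = fun x => ((φ x - p.eval x) * ((x + 1) / 2)) * G x := by
                funext x; simp only [hH]; ring
              rw [this]
              exact hint _ (by fun_prop)
            apply integral_mono_ae hIsub.norm (hHint.norm.const_mul ε)
            filter_upwards [ae_restrict_mem measurableSet_Ioo] with x hx
            rw [norm_mul]
            apply mul_le_mul_of_nonneg_right _ (norm_nonneg _)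
            have := hp x (Set.Ioo_subset_Icc_self hx)
            rw [Real.norm_eq_abs, abs_sub_comm]
            exact le_of_lt this
        _ = ε * cH := integral_const_mul ε _
    have hI0 : |I| ≤ 0 := by
      by_contra h
      push_neg at h
      have h1 := key (|I| / (2 * (cH + 1))) (by positivity)
      have h2 : |I| / (2 * (cH + 1)) * cH < |I| := by
        rw [div_mul_eq_mul_div, div_lt_iff₀ (by positivity)]
        nlinarith
      linarith
    have := abs_nonneg I
    rw [hI]
    linarith [abs_eq_zero.mp (le_antisymm hI0 this) ]
  -- conclude G = 0 a.e.
  have hGzero : G =ᵐ[μ] 0 := by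
    filter_upwards [hHzero, ae_restrict_mem measurableSet_Ioo] with x hx hmem
    have hne : (x + 1) / 2 ≠ 0 := by
      have : (0:ℝ) < x := hmem.1
      positivity
    have := mul_eq_zero.mp hx
    rcases this with h | h
    · exact absurd h hne
    · exact h
  exact Lp.eq_zero_iff_ae_eq_zero.mpr hGzero
end

section
/- For all integers m, n ≥ 1, the Legendre rational functions satisfy the orthogonality relation ∫₀¹ R_m(x) R_n(x) dx = δ_{mn}/(2(2n−1)). -/
open Polynomial MeasureTheory Real Filter

/-- The proper Legendre rational function `R_n(x) = (-1)^{n-1} A_n((1-x)/(1+x))`. -/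
noncomputable def legendreRational (n : ℕ) (x : ℝ) : ℝ :=
  (-1) ^ (n - 1) * alteredLegendre n ((1 - x) / (1 + x))

section Aux
open intervalIntegral

lemma ibp_once (p q : ℝ[X]) (hq1 : q.eval 1 = 0) (hqm1 : q.eval (-1) = 0) :
    ∫ x in (-1:ℝ)..1, p.eval x * (derivative q).eval x
      = - ∫ x in (-1:ℝ)..1, (derivative p).eval x * q.eval x := by
  have key : ∫ x in (-1:ℝ)..1, (derivative (p*q)).eval x = (p*q).eval 1 - (p*q).eval (-1) :=
    integral_eq_sub_of_hasDerivAt (fun x _ => (p*q).hasDerivAt x)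
      ((derivative (p*q)).continuous.intervalIntegrable _ _)
  rw [derivative_mul] at key
  simp only [eval_add, eval_mul, hq1, hqm1, mul_zero, zero_mul, sub_zero] at key
  have h1 : IntervalIntegrable (fun x => (derivative p).eval x * q.eval x) volume (-1:ℝ) 1 :=
    (((derivative p).continuous).mul q.continuous).intervalIntegrable _ _
  have h2 : IntervalIntegrable (fun x => p.eval x * (derivative q).eval x) volume (-1:ℝ) 1 :=
    ((p.continuous).mul (derivative q).continuous).intervalIntegrable _ _
  rw [intervalIntegral.integral_add h1 h2] at key
  linarith

lemma ibp_iter (n : ℕ) : ∀ (p q : ℝ[X]),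
    (∀ k < n, (derivative^[k] q).eval 1 = 0) → (∀ k < n, (derivative^[k] q).eval (-1) = 0) →
    ∫ x in (-1:ℝ)..1, p.eval x * (derivative^[n] q).eval x
      = (-1)^n * ∫ x in (-1:ℝ)..1, (derivative^[n] p).eval x * q.eval x := by
  induction n with
  | zero => intro p q _ _; simp
  | succ n ih =>
    intro p q h1 hm1
    rw [Function.iterate_succ_apply']
    rw [ibp_once p (derivative^[n] q) (h1 n (by omega)) (hm1 n (by omega))]
    have := ih (derivative p) q (fun k hk => h1 k (by omega)) (fun k hk => hm1 k (by omega))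
    rw [this, ← Function.iterate_succ_apply]
    ring

lemma vanish (n k : ℕ) (hk : k < n) (a : ℝ) (ha : a ^ 2 = 1) :
    (derivative^[k] ((X ^ 2 - 1 : ℝ[X]) ^ n)).eval a = 0 := by
  have hdvd : (X - C a) ^ n ∣ (X ^ 2 - 1 : ℝ[X]) ^ n := by
    apply pow_dvd_pow_of_dvd
    rw [dvd_iff_isRoot]
    simp [IsRoot, ha]
  obtain ⟨r, hr⟩ := pow_sub_dvd_iterate_derivative_of_pow_dvd k hdvd
  rw [hr]
  have h3 : n - k = (n - k - 1) + 1 := by omega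
  rw [h3, eval_mul, eval_pow, pow_succ, eval_sub, eval_X, eval_C, sub_self, mul_zero, zero_mul]

lemma monic_aux (n : ℕ) : ((X ^ 2 - 1 : ℝ[X]) ^ n).Monic := by
  apply Polynomial.Monic.pow
  have h : (X ^ 2 - 1 : ℝ[X]) = X ^ 2 + (-1) := by ring
  rw [h]
  apply monic_X_pow_add
  simp

lemma natdeg_aux (n : ℕ) : ((X ^ 2 - 1 : ℝ[X]) ^ n).natDegree = 2 * n := by
  rw [natDegree_pow]
  have h : ((X:ℝ[X]) ^ 2 - 1).natDegree = 2 := by compute_degree!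
  rw [h]; ring

lemma top_deriv (n : ℕ) :
    derivative^[2*n] ((X ^ 2 - 1 : ℝ[X]) ^ n) = C ((2*n).factorial : ℝ) := by
  set p : ℝ[X] := (X ^ 2 - 1) ^ n with hp
  rcases Nat.eq_zero_or_pos n with h0 | hpos
  · subst h0; simp [hp]
  have hXp : derivative^[2*n] ((X : ℝ[X]) ^ (2*n)) = C ((2*n).factorial : ℝ) := by
    rw [iterate_derivative_X_pow_eq_smul]
    simp [Nat.descFactorial_self, Polynomial.smul_eq_C_mul]
  have hz : derivative^[2*n] (p - X ^ (2*n)) = 0 := by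
    rcases eq_or_ne (p - X ^ (2*n)) 0 with h | h
    · rw [h]; simp
    apply iterate_derivative_eq_zero
    rw [natDegree_lt_iff_degree_lt h]
    have hdeg : (p - X ^ (2*n)).degree < p.degree :=
      Polynomial.degree_sub_lt
        (by rw [degree_X_pow, degree_eq_natDegree (monic_aux n).ne_zero, natdeg_aux])
        (monic_aux n).ne_zero
        (by rw [(monic_aux n).leadingCoeff, leadingCoeff_X_pow])
    rwa [degree_eq_natDegree (monic_aux n).ne_zero, natdeg_aux] at hdeg
  have hsplit : derivative^[2*n] p
      = derivative^[2*n] (p - X ^ (2*n)) + derivative^[2*n] ((X:ℝ[X]) ^ (2*n)) := by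
    have hadd : ∀ (k : ℕ) (a b : ℝ[X]),
        derivative^[k] (a + b) = derivative^[k] a + derivative^[k] b := by
      intro k
      induction k with
      | zero => intro a b; simp
      | succ k ih => intro a b; simp [Function.iterate_succ_apply, derivative_add, ih]
    rw [← hadd, sub_add_cancel]
  rw [hsplit, hz, hXp, zero_add]

lemma I_rec (n : ℕ) :
    (2*(n:ℝ)+3) * (∫ x in (-1:ℝ)..1, (1 - x^2)^(n+1))
      = (2*(n:ℝ)+2) * ∫ x in (-1:ℝ)..1, (1 - x^2)^n := by
  have hderiv : ∀ x ∈ Set.uIcc (-1:ℝ) 1, HasDerivAt (fun x : ℝ => x * (1-x^2)^(n+1))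
      ((2*(n:ℝ)+3) * (1-x^2)^(n+1) - (2*(n:ℝ)+2) * (1-x^2)^n) x := by
    intro x _
    have hsq : HasDerivAt (fun y : ℝ => 1 - y^2) (-(2*x)) x := by
      simpa using (hasDerivAt_pow 2 x).const_sub 1
    have hpow := hsq.fun_pow (n+1)
    have hmul := (hasDerivAt_id x).fun_mul hpow
    refine hmul.congr_deriv ?_
    simp only [Nat.add_sub_cancel, pow_succ, id_eq]
    push_cast; ring
  have key := integral_eq_sub_of_hasDerivAt hderiv (by
    apply Continuous.intervalIntegrable; continuity)
  rw [intervalIntegral.integral_sub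
      ((by continuity : Continuous fun x:ℝ => (2*(n:ℝ)+3) * (1-x^2)^(n+1)).intervalIntegrable _ _)
      ((by continuity : Continuous fun x:ℝ => (2*(n:ℝ)+2) * (1-x^2)^n).intervalIntegrable _ _),
    intervalIntegral.integral_const_mul, intervalIntegral.integral_const_mul] at key
  have h0 : ((1:ℝ) * (1 - 1^2)^(n+1) - (-1) * (1 - (-1)^2)^(n+1)) = 0 := by norm_num
  rw [h0] at key; linarith

lemma I_val (n : ℕ) :
    ∫ x in (-1:ℝ)..1, (1 - x^2)^n
      = 2^(2*n+1) * (n.factorial : ℝ)^2 / ((2*n+1).factorial : ℝ) := by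
  induction n with
  | zero => simp; norm_num
  | succ n ih =>
    have hrec := I_rec n
    rw [ih] at hrec
    have h3 : (2*(n:ℝ)+3) ≠ 0 := by positivity
    have hF : ((2*n+1).factorial : ℝ) ≠ 0 := by positivity
    have hI : ∫ x in (-1:ℝ)..1, (1 - x^2)^(n+1)
        = (2*(n:ℝ)+2) * (2^(2*n+1) * (n.factorial : ℝ)^2 / ((2*n+1).factorial : ℝ)) / (2*(n:ℝ)+3) := by
      field_simp
      field_simp at hrec
      linarith [hrec]
    rw [hI]
    have hf1 : ((2*(n+1)+1).factorial : ℝ)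
        = (2*(n:ℝ)+3) * ((2*(n:ℝ)+2) * ((2*n+1).factorial : ℝ)) := by
      have h : 2*(n+1)+1 = (2*n+1) + 1 + 1 := by ring
      rw [h, Nat.factorial_succ, Nat.factorial_succ]
      push_cast; ring
    have hf2 : ((n+1).factorial : ℝ) = ((n:ℝ)+1) * (n.factorial : ℝ) := by
      rw [Nat.factorial_succ]; push_cast; ring
    rw [hf1, hf2]
    field_simp
    ring

lemma core (m n : ℕ) (h : m ≤ n) :
    ∫ x in (-1:ℝ)..1,
        (derivative^[m] ((X^2-1:ℝ[X])^m)).eval x * (derivative^[n] ((X^2-1:ℝ[X])^n)).eval x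
      = if m = n then ((2*n).factorial : ℝ) * ∫ x in (-1:ℝ)..1, (1 - x^2)^n else 0 := by
  rw [ibp_iter n _ _ (fun k hk => vanish n k hk 1 (by norm_num))
      (fun k hk => vanish n k hk (-1) (by norm_num))]
  rcases lt_or_eq_of_le h with hlt | heq
  · have hz : derivative^[n] (derivative^[m] ((X^2-1:ℝ[X])^m)) = 0 := by
      apply iterate_derivative_eq_zero
      calc (derivative^[m] ((X^2-1:ℝ[X])^m)).natDegree
          ≤ ((X^2-1:ℝ[X])^m).natDegree - m := natDegree_iterate_derivative _ _
        _ ≤ m := by rw [natdeg_aux]; omega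
        _ < n := hlt
    rw [hz, if_neg hlt.ne]
    simp
  · subst heq
    rw [if_pos rfl]
    have hD : derivative^[m] (derivative^[m] ((X^2-1:ℝ[X])^m)) = C ((2*m).factorial : ℝ) := by
      rw [← Function.iterate_add_apply]
      have : m + m = 2*m := by ring
      rw [this, top_deriv]
    rw [hD]
    have hint : ∀ x : ℝ, (C ((2*m).factorial : ℝ)).eval x * ((X^2-1:ℝ[X])^m).eval x
        = ((2*m).factorial : ℝ) * ((-1)^m * (1 - x^2)^m) := by
      intro x
      simp only [eval_C, eval_pow, eval_sub, eval_one, eval_X,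
        show ∀ x:ℝ, (x^2 - 1) = (-1) * (1 - x^2) from fun x => by ring, mul_pow]
    rw [intervalIntegral.integral_congr (fun x _ => hint x),
      intervalIntegral.integral_const_mul, intervalIntegral.integral_const_mul,
      ← mul_assoc, ← mul_assoc]
    congr 1
    rw [mul_comm ((-1:ℝ)^m), mul_assoc, ← pow_add, ← two_mul,
      Even.neg_one_pow ⟨m, two_mul m⟩, mul_one]

lemma legendre_orth_le (m n : ℕ) (h : m ≤ n) :
    ∫ x in (-1:ℝ)..1, (legendre m).eval x * (legendre n).eval x
      = if m = n then 2/(2*(n:ℝ)+1) else 0 := by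
  have hcongr : ∀ x : ℝ, (legendre m).eval x * (legendre n).eval x
      = ((1 / (2 ^ m * m.factorial) : ℝ) * (1 / (2 ^ n * n.factorial) : ℝ))
        * ((derivative^[m] ((X^2-1:ℝ[X])^m)).eval x * (derivative^[n] ((X^2-1:ℝ[X])^n)).eval x) := by
    intro x
    simp only [legendre, eval_smul, smul_eq_mul]
    ring
  rw [intervalIntegral.integral_congr (fun x _ => hcongr x),
    intervalIntegral.integral_const_mul, core m n h]
  rcases eq_or_ne m n with heq | hne
  · subst heq
    rw [if_pos rfl, if_pos rfl, I_val]
    have h1 : ((2*m+1).factorial : ℝ) = (2*(m:ℝ)+1) * ((2*m).factorial : ℝ) := by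
      rw [Nat.factorial_succ]; push_cast; ring
    rw [h1]
    have h2 : ((m.factorial : ℝ)) ≠ 0 := by positivity
    have h3 : ((2*m).factorial : ℝ) ≠ 0 := by positivity
    have h4 : (2*(m:ℝ)+1) ≠ 0 := by positivity
    field_simp
    ring
  · rw [if_neg hne, if_neg hne, mul_zero]

lemma legendre_orth (m n : ℕ) :
    ∫ x in (-1:ℝ)..1, (legendre m).eval x * (legendre n).eval x
      = if m = n then 2/(2*(n:ℝ)+1) else 0 := by
  rcases le_or_gt m n with h | h
  · exact legendre_orth_le m n h
  · rw [intervalIntegral.integral_congr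
      (fun x _ => mul_comm ((legendre m).eval x) ((legendre n).eval x)),
      legendre_orth_le n m h.le, if_neg h.ne, if_neg h.ne']

end Aux

/-- Orthogonality of the Legendre rational functions:
`∫₀¹ R_m(x) R_n(x) dx = δ_{mn}/(2(2n-1))`. -/
theorem legendreRational_orthogonality (m n : ℕ) (hm : 1 ≤ m) (hn : 1 ≤ n) :
    ∫ x in (0:ℝ)..1, legendreRational m x * legendreRational n x =
      (if m = n then 1 else 0) / (2 * (2 * (n : ℝ) - 1)) := by
  obtain ⟨m', rfl⟩ : ∃ m', m = m'+1 := ⟨m-1, by omega⟩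
  obtain ⟨n', rfl⟩ : ∃ n', n = n'+1 := ⟨n-1, by omega⟩
  set g : ℝ → ℝ := fun y => (legendre m').eval y * (legendre n').eval y with hgdef
  have hg : Continuous g := (legendre m').continuous_aeval.mul (legendre n').continuous_aeval
  set f : ℝ → ℝ := fun x => (1-3*x)/(1+x) with hfdef
  have hderiv : ∀ x ∈ Set.uIcc (0:ℝ) 1, HasDerivAt f (-4/(1+x)^2) x := by
    intro x hx
    rw [Set.uIcc_of_le (by norm_num)] at hx
    have hx0 : (1:ℝ) + x ≠ 0 := by nlinarith [hx.1]
    have h1 : HasDerivAt (fun x:ℝ => 1 - 3*x) (-3) x := by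
      simpa using ((hasDerivAt_id x).const_mul (3:ℝ)).const_sub 1
    have h2 : HasDerivAt (fun x:ℝ => 1 + x) 1 x := by
      simpa using (hasDerivAt_id x).const_add (1:ℝ)
    have h := h1.fun_div h2 hx0
    refine h.congr_deriv ?_
    field_simp
    ring
  have hcont : ContinuousOn (fun x:ℝ => -4/(1+x)^2) (Set.uIcc (0:ℝ) 1) := by
    rw [Set.uIcc_of_le (by norm_num)]
    apply ContinuousOn.div continuousOn_const (by fun_prop)
    intro x hx
    have : (1:ℝ) + x ≠ 0 := by nlinarith [hx.1]
    positivity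
  have hsub := intervalIntegral.integral_comp_smul_deriv hderiv hcont hg
  simp only [Function.comp] at hsub
  have hf0 : f 0 = 1 := by simp [hfdef]
  have hf1 : f 1 = -1 := by norm_num [hfdef]
  rw [hf0, hf1] at hsub
  have hpt : ∀ x ∈ Set.uIcc (0:ℝ) 1,
      legendreRational (m'+1) x * legendreRational (n'+1) x
        = ((-1:ℝ))^(m'+n') * (-1/4) * ((-4/(1+x)^2) • g (f x)) := by
    intro x hx
    rw [Set.uIcc_of_le (by norm_num)] at hx
    have hx0 : (1:ℝ) + x ≠ 0 := by nlinarith [hx.1]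
    simp only [legendreRational, alteredLegendre, _root_.shiftedLegendre, Nat.add_sub_cancel,
      smul_eq_mul, hgdef, hfdef]
    have ht1 : ((1-x)/(1+x) + 1) / 2 = 1/(1+x) := by field_simp; ring
    have ht2 : 2 * ((1-x)/(1+x)) - 1 = (1-3*x)/(1+x) := by field_simp; ring
    rw [ht1, ht2]
    field_simp
    ring
  rw [intervalIntegral.integral_congr hpt, intervalIntegral.integral_const_mul, hsub,
    intervalIntegral.integral_symm (-1) 1, legendre_orth m' n']
  have hif : ((m'+1 = n'+1) ↔ (m' = n')) := by omega
  rcases eq_or_ne m' n' with h | h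
  · subst h
    rw [if_pos rfl, if_pos rfl, Even.neg_one_pow ⟨m', rfl⟩, one_mul]
    have h1 : (2*(m':ℝ)+1) ≠ 0 := by positivity
    have h2 : (2*(↑(m'+1):ℝ) - 1) = 2*(m':ℝ)+1 := by push_cast; ring
    rw [h2]
    field_simp
    ring
  · rw [if_neg h, if_neg (by omega : ¬ (m'+1 = n'+1))]
    simp
end

section
/- The family of Legendre rational functions {R_n : n ≥ 1} is total in L²(0,1): the linear span of the functions R_n restricted to [0,1] is dense in L²(0,1). -/
open Polynomial MeasureTheory Real Filter

namespace LegendreAux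

open scoped ENNReal NNReal

/-! ### Degree facts -/

lemma iter_deriv_facts (p : Polynomial ℝ) (hp : p ≠ 0) :
    ∀ k, k ≤ p.natDegree →
      derivative^[k] p ≠ 0 ∧ (derivative^[k] p).natDegree = p.natDegree - k := by
  intro k
  induction k with
  | zero => intro _; simpa using hp
  | succ k ih =>
    intro hk
    obtain ⟨h0, hd⟩ := ih (Nat.le_of_succ_le hk)
    have hpos : 0 < (derivative^[k] p).natDegree := by omega
    have hdeg := Polynomial.degree_derivative_eq _ hpos
    rw [Function.iterate_succ_apply']
    constructor
    · intro h
      rw [h, Polynomial.degree_zero] at hdeg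
      exact absurd hdeg (by simp)
    · have := Polynomial.natDegree_eq_of_degree_eq_some hdeg
      omega

lemma base_ne_zero (n : ℕ) : ((X ^ 2 - 1 : Polynomial ℝ) ^ n) ≠ 0 := by
  have h : (X ^ 2 - 1 : Polynomial ℝ).Monic := by
    simpa using (Polynomial.monic_X_pow_sub_C (1 : ℝ) (by norm_num : (2:ℕ) ≠ 0))
  exact (h.pow n).ne_zero

lemma base_natDegree (n : ℕ) : ((X ^ 2 - 1 : Polynomial ℝ) ^ n).natDegree = 2 * n := by
  rw [Polynomial.natDegree_pow]
  have : (X ^ 2 - 1 : Polynomial ℝ) = X ^ 2 - C 1 := by simp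
  rw [this, Polynomial.natDegree_X_pow_sub_C]
  ring

lemma legendre_ne_zero (n : ℕ) : legendre n ≠ 0 := by
  have hc : (1 / (2 ^ n * n.factorial) : ℝ) ≠ 0 := by positivity
  have h := (iter_deriv_facts _ (base_ne_zero n) n (by rw [base_natDegree]; omega)).1
  exact smul_ne_zero hc h

lemma legendre_natDegree (n : ℕ) : (legendre n).natDegree = n := by
  have hc : (1 / (2 ^ n * n.factorial) : ℝ) ≠ 0 := by positivity
  obtain ⟨h0, hd⟩ := iter_deriv_facts _ (base_ne_zero n) n (by rw [base_natDegree]; omega)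
  rw [base_natDegree] at hd
  rw [legendre, Polynomial.smul_eq_C_mul, Polynomial.natDegree_C_mul hc, hd]
  omega

/-- The polynomial `q_k(t) = P_k(1 - 4t)`. -/
noncomputable def qq (k : ℕ) : Polynomial ℝ := (legendre k).comp (1 - 4 * X)

lemma lin_natDegree : (1 - 4 * X : Polynomial ℝ).natDegree = 1 := by
  compute_degree!

lemma qq_natDegree (k : ℕ) : (qq k).natDegree = k := by
  rw [qq, Polynomial.natDegree_comp, lin_natDegree, legendre_natDegree, mul_one]

lemma qq_ne_zero (k : ℕ) : qq k ≠ 0 := by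
  cases k with
  | zero =>
    have : qq 0 = 1 := by
      simp [qq, legendre]
    rw [this]; exact one_ne_zero
  | succ k =>
    intro h
    have := qq_natDegree (k + 1)
    rw [h] at this
    simp at this

/-- A family of nonzero polynomials with `natDegree (f n) = n` spans everything. -/
lemma span_poly (f : ℕ → Polynomial ℝ) (h0 : ∀ n, f n ≠ 0) (hd : ∀ n, (f n).natDegree = n)
    (p : Polynomial ℝ) : p ∈ Submodule.span ℝ (Set.range f) := by
  suffices H : ∀ N, ∀ p : Polynomial ℝ, p.natDegree ≤ N → p ∈ Submodule.span ℝ (Set.range f) from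
    H p.natDegree p le_rfl
  intro N
  induction N with
  | zero =>
    intro p hp
    obtain ⟨a, rfl⟩ := Polynomial.natDegree_eq_zero.mp (Nat.le_zero.mp hp)
    obtain ⟨b, hb⟩ := Polynomial.natDegree_eq_zero.mp (hd 0)
    have hb0 : b ≠ 0 := by
      intro h; apply h0 0; rw [← hb, h, map_zero]
    have key : C a = (a * b⁻¹) • f 0 := by
      rw [← hb, Polynomial.smul_C, smul_eq_mul]
      field_simp
    rw [key]
    exact Submodule.smul_mem _ _ (Submodule.subset_span ⟨0, rfl⟩)
  | succ N ih =>
    intro p hp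
    by_cases h : p.natDegree ≤ N
    · exact ih p h
    have hdeg : p.natDegree = N + 1 := by omega
    have hp0 : p ≠ 0 := fun h' => by simp [h'] at hdeg
    set c := p.leadingCoeff / (f (N + 1)).leadingCoeff with hc_def
    have hlcf : (f (N + 1)).leadingCoeff ≠ 0 := Polynomial.leadingCoeff_ne_zero.mpr (h0 _)
    have hc : c ≠ 0 := div_ne_zero (Polynomial.leadingCoeff_ne_zero.mpr hp0) hlcf
    have hdegs : p.degree = (c • f (N + 1)).degree := by
      rw [Polynomial.smul_eq_C_mul, Polynomial.degree_C_mul hc,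
        Polynomial.degree_eq_natDegree hp0, Polynomial.degree_eq_natDegree (h0 _), hd, hdeg]
    have hlceq : p.leadingCoeff = (c • f (N + 1)).leadingCoeff := by
      rw [Polynomial.smul_eq_C_mul, Polynomial.leadingCoeff_mul, Polynomial.leadingCoeff_C]
      rw [hc_def, div_mul_cancel₀ _ hlcf]
    have hsub := Polynomial.degree_sub_lt hdegs hp0 hlceq
    have hle : (p - c • f (N + 1)).natDegree ≤ N := by
      by_cases hq : p - c • f (N + 1) = 0
      · simp [hq]
      have : (p - c • f (N + 1)).degree < (N + 1 : ℕ) := by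
        rwa [Polynomial.degree_eq_natDegree hp0, hdeg] at hsub
      have := (Polynomial.natDegree_lt_iff_degree_lt hq).mpr this
      omega
    have : p = (p - c • f (N + 1)) + c • f (N + 1) := by ring
    rw [this]
    exact Submodule.add_mem _ (ih _ hle)
      (Submodule.smul_mem _ _ (Submodule.subset_span ⟨N + 1, rfl⟩))

/-! ### The substitution `u = x/(1+x)` -/

noncomputable def uu (x : ℝ) : ℝ := x / (1 + x)

noncomputable def FF (p : Polynomial ℝ) (x : ℝ) : ℝ := (1 - uu x) * p.eval (uu x)

lemma uu_mem {x : ℝ} (hx : x ∈ Set.Icc (0:ℝ) 1) : uu x ∈ Set.Icc (0:ℝ) 1 := by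
  obtain ⟨h0, h1⟩ := hx
  have hpos : (0:ℝ) < 1 + x := by linarith
  constructor
  · exact div_nonneg h0 hpos.le

  · rw [uu, div_le_one hpos]; linarith

lemma one_sub_uu {x : ℝ} (hx : (-1:ℝ) < x) : 1 - uu x = 1 / (1 + x) := by
  have hpos : (0:ℝ) < 1 + x := by linarith
  rw [uu, eq_div_iff hpos.ne', sub_mul, div_mul_cancel₀ _ hpos.ne']; ring

/-- The key pointwise identity on `(0,1)`. -/
lemma legendreRational_eq (n : ℕ) {x : ℝ} (hx : x ∈ Set.Ioo (0:ℝ) 1) :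
    legendreRational n x = (-1 : ℝ) ^ (n - 1) * FF (qq (n - 1)) x := by
  have hpos : (0:ℝ) < 1 + x := by linarith [hx.1]
  have hne : (1:ℝ) + x ≠ 0 := ne_of_gt hpos
  unfold legendreRational alteredLegendre _root_.shiftedLegendre FF qq uu
  rw [Polynomial.eval_comp]
  congr 1
  have h1 : ((1 - x) / (1 + x) + 1) / 2 = 1 - x / (1 + x) := by field_simp; ring
  have h2 : 2 * ((1 - x) / (1 + x)) - 1 = (1 - 4 * X : Polynomial ℝ).eval (x / (1 + x)) := by
    simp only [Polynomial.eval_sub, Polynomial.eval_one, Polynomial.eval_mul,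
      Polynomial.eval_ofNat, Polynomial.eval_X]
    field_simp
    ring
  rw [h1, h2]

/-! ### `MemLp` facts -/

instance : IsFiniteMeasure (volume.restrict (Set.Ioo (0:ℝ) 1)) :=
  ⟨by simp [Measure.restrict_apply_univ, Real.volume_Ioo]⟩

lemma uu_measurable : Measurable uu :=
  measurable_id.div (measurable_const.add measurable_id)

lemma FF_measurable (p : Polynomial ℝ) : Measurable (FF p) :=
  (measurable_const.sub uu_measurable).mul
    ((Polynomial.continuous p).measurable.comp uu_measurable)

lemma FF_bound (p : Polynomial ℝ) :
    ∃ C : ℝ, 0 ≤ C ∧ ∀ x ∈ Set.Icc (0:ℝ) 1, |FF p x| ≤ C := by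
  obtain ⟨z, _, hz⟩ := isCompact_Icc.exists_isMaxOn (⟨0, by norm_num⟩ : (Set.Icc (0:ℝ) 1).Nonempty)
    ((Polynomial.continuous p).abs.continuousOn)
  refine ⟨|p.eval z|, abs_nonneg _, fun x hx => ?_⟩
  have hu := uu_mem hx
  have h1 : |1 - uu x| ≤ 1 := by
    rw [abs_le]
    constructor <;> [linarith [hu.2]; linarith [hu.1]]
  calc |FF p x| = |1 - uu x| * |p.eval (uu x)| := abs_mul _ _
    _ ≤ 1 * |p.eval z| := by
        exact mul_le_mul h1 (hz hu) (abs_nonneg _) zero_le_one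
    _ = |p.eval z| := one_mul _

lemma memFF (p : Polynomial ℝ) : MemLp (FF p) 2 (volume.restrict (Set.Ioo (0:ℝ) 1)) := by
  obtain ⟨C, hC0, hC⟩ := FF_bound p
  refine MemLp.of_bound (FF_measurable p).aestronglyMeasurable C ?_
  filter_upwards [ae_restrict_mem measurableSet_Ioo] with x hx
  rw [Real.norm_eq_abs]
  exact hC x (Set.Ioo_subset_Icc_self hx)

/-! ### The span of the Legendre rational functions contains all `FF p` -/

lemma FF_toLp_mem (p : Polynomial ℝ) :
    (memFF p).toLp (FF p) ∈ Submodule.span ℝ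
      {f : Lp ℝ 2 (volume.restrict (Set.Ioo (0:ℝ) 1)) |
        ∃ n : ℕ, 1 ≤ n ∧
          (f : ℝ → ℝ) =ᵐ[volume.restrict (Set.Ioo (0:ℝ) 1)] legendreRational n} := by
  have hp := span_poly qq qq_ne_zero qq_natDegree p
  induction hp using Submodule.span_induction with
  | mem q hq =>
    obtain ⟨k, rfl⟩ := hq
    have hae : (((-1:ℝ)) ^ k • fun x => FF (qq k) x)
        =ᵐ[volume.restrict (Set.Ioo (0:ℝ) 1)] legendreRational (k + 1) := by
      filter_upwards [ae_restrict_mem measurableSet_Ioo] with x hx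
      rw [legendreRational_eq (k + 1) hx]
      simp [smul_eq_mul]
    have hmem : ((-1:ℝ)) ^ k • (memFF (qq k)).toLp (FF (qq k)) ∈
        {f : Lp ℝ 2 (volume.restrict (Set.Ioo (0:ℝ) 1)) |
          ∃ n : ℕ, 1 ≤ n ∧
            (f : ℝ → ℝ) =ᵐ[volume.restrict (Set.Ioo (0:ℝ) 1)] legendreRational n} := by
      refine ⟨k + 1, Nat.le_add_left 1 k, ?_⟩
      calc (↑(((-1:ℝ)) ^ k • (memFF (qq k)).toLp (FF (qq k))) : ℝ → ℝ)
          =ᵐ[volume.restrict (Set.Ioo (0:ℝ) 1)]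
            ((-1:ℝ)) ^ k • ((memFF (qq k)).toLp (FF (qq k)) : ℝ → ℝ) :=
            Lp.coeFn_smul _ _
        _ =ᵐ[volume.restrict (Set.Ioo (0:ℝ) 1)] ((-1:ℝ)) ^ k • fun x => FF (qq k) x :=
            ((memFF (qq k)).coeFn_toLp).fun_comp fun y => ((-1:ℝ)) ^ k • y
        _ =ᵐ[volume.restrict (Set.Ioo (0:ℝ) 1)] legendreRational (k + 1) := hae
    have hsq : ((-1:ℝ)) ^ k * ((-1:ℝ)) ^ k = 1 := by
      rw [← pow_add]
      exact Even.neg_one_pow ⟨k, rfl⟩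
    have : (memFF (qq k)).toLp (FF (qq k)) =
        ((-1:ℝ)) ^ k • (((-1:ℝ)) ^ k • (memFF (qq k)).toLp (FF (qq k))) := by
      rw [smul_smul, hsq, one_smul]
    rw [this]
    exact Submodule.smul_mem _ _ (Submodule.subset_span hmem)
  | zero =>
    have h : FF (0 : Polynomial ℝ) = (0 : ℝ → ℝ) := funext fun x => by simp [FF]
    rw [MemLp.toLp_congr (memFF 0) ((memFF 0).ae_eq (Filter.EventuallyEq.of_eq h))
      (Filter.EventuallyEq.of_eq h), MemLp.toLp_zero]
    exact Submodule.zero_mem _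
  | add x y hx hy ihx ihy =>
    have h : FF (x + y) = FF x + FF y := funext fun t => by
      simp [FF, Polynomial.eval_add, mul_add]
    rw [MemLp.toLp_congr (memFF (x + y)) ((memFF x).add (memFF y))
      (Filter.EventuallyEq.of_eq h), MemLp.toLp_add (memFF x) (memFF y)]
    exact Submodule.add_mem _ ihx ihy
  | smul a x hx ihx =>
    have h : FF (a • x) = a • FF x := funext fun t => by
      simp [FF, Polynomial.eval_smul, smul_eq_mul]
      ring
    rw [MemLp.toLp_congr (memFF (a • x)) ((memFF x).const_smul a)
      (Filter.EventuallyEq.of_eq h), MemLp.toLp_const_smul a (memFF x)]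
    exact Submodule.smul_mem _ _ ihx

end LegendreAux

open LegendreAux

/-- The Legendre rational functions `{R_n : n ≥ 1}` are total in `L²(0,1)`. -/
theorem legendreRational_total :
    Dense (↑(Submodule.span ℝ
      {f : Lp ℝ 2 (volume.restrict (Set.Ioo (0:ℝ) 1)) |
        ∃ n : ℕ, 1 ≤ n ∧
          (f : ℝ → ℝ) =ᵐ[volume.restrict (Set.Ioo (0:ℝ) 1)] legendreRational n}) :
      Set (Lp ℝ 2 (volume.restrict (Set.Ioo (0:ℝ) 1)))) := by
  haveI : Fact ((1:ENNReal) ≤ 2) := ⟨one_le_two⟩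
  intro f
  rw [Metric.mem_closure_iff]
  intro ε hε
  -- Step 1: approximate `f` by a bounded continuous function.
  have hε4 : (ENNReal.ofReal (ε / 4)) ≠ 0 := (ENNReal.ofReal_pos.mpr (by linarith)).ne'
  obtain ⟨g, hg, gmem⟩ := (Lp.memLp f).exists_boundedContinuous_eLpNorm_sub_le
    (by norm_num : (2:ENNReal) ≠ ⊤) hε4
  -- Step 2: Stone–Weierstrass on `[0,1]` for the subalgebra generated by `uu`.
  haveI : CompactSpace (Set.Icc (0:ℝ) 1) := isCompact_iff_compactSpace.mp isCompact_Icc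
  set uc : C(Set.Icc (0:ℝ) 1, ℝ) :=
    ⟨fun z => uu (z : ℝ), by
      exact continuous_subtype_val.div (continuous_const.add continuous_subtype_val)
        (fun z => ne_of_gt (by have := z.2.1; linarith))⟩ with huc
  have hsep : (Algebra.adjoin ℝ {uc}).SeparatesPoints := by
    intro z w hzw
    refine ⟨_, ⟨uc, Algebra.subset_adjoin rfl, rfl⟩, ?_⟩
    have hz1 : (0:ℝ) < 1 + (z:ℝ) := by have := z.2.1; linarith
    have hw1 : (0:ℝ) < 1 + (w:ℝ) := by have := w.2.1; linarith
    show uu (z:ℝ) ≠ uu (w:ℝ)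
    intro h
    apply hzw
    rw [uu, uu, div_eq_div_iff (ne_of_gt hz1) (ne_of_gt hw1)] at h
    have : (z:ℝ) = (w:ℝ) := by nlinarith
    exact Subtype.ext this
  set h : C(Set.Icc (0:ℝ) 1, ℝ) :=
    ⟨fun z => g (z : ℝ) * (1 + (z : ℝ)),
      (g.continuous.comp continuous_subtype_val).mul
        (continuous_const.add continuous_subtype_val)⟩ with hh
  obtain ⟨g', hg'⟩ := ContinuousMap.exists_mem_subalgebra_near_continuousMap_of_separatesPoints
    (Algebra.adjoin ℝ {uc}) hsep h (ε / 4) (by linarith)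
  have hg'mem : (g' : C(Set.Icc (0:ℝ) 1, ℝ)) ∈ Algebra.adjoin ℝ ({uc} : Set _) := g'.2
  have hg'mem' : (g' : C(Set.Icc (0:ℝ) 1, ℝ)) ∈ (Polynomial.aeval (R := ℝ) uc).range := by
    rw [← Algebra.adjoin_singleton_eq_range_aeval]; exact hg'mem
  obtain ⟨p, hp⟩ := hg'mem'
  -- Step 3: pointwise bound `|FF p x - g x| ≤ ε/4` on `(0,1)`.
  have key : ∀ x ∈ Set.Ioo (0:ℝ) 1, |FF p x - g x| ≤ ε / 4 := by
    intro x hx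
    have hx1 : (0:ℝ) < 1 + x := by linarith [hx.1]
    set z : Set.Icc (0:ℝ) 1 := ⟨x, Set.Ioo_subset_Icc_self hx⟩ with hz
    have h1u : 1 - uu x = 1 / (1 + x) := one_sub_uu (by linarith [hx.1])
    have heval : ((g' : C(Set.Icc (0:ℝ) 1, ℝ)) z : ℝ) = p.eval (uu x) := by
      have h0 : (Polynomial.aeval (R := ℝ) uc p) z = p.eval (uc z) :=
        Polynomial.aeval_continuousMap_apply p uc z
      rw [← hp]; exact h0
    have hfact : FF p x - g x = (1 - uu x) * (p.eval (uu x) - g x * (1 + x)) := by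
      rw [FF, h1u]
      field_simp
    have habs : |1 - uu x| ≤ 1 := by
      have hu := uu_mem (Set.Ioo_subset_Icc_self hx)
      rw [abs_le]
      constructor <;> [linarith [hu.2]; linarith [hu.1]]
    have hbd : |p.eval (uu x) - g x * (1 + x)| ≤ ε / 4 := by
      have h2 : p.eval (uu x) - g x * (1 + x) =
          ((g' : C(Set.Icc (0:ℝ) 1, ℝ)) - h) z := by
        simp [heval, hh]; rfl
      rw [h2]
      have h3 := ContinuousMap.norm_coe_le_norm ((g' : C(Set.Icc (0:ℝ) 1, ℝ)) - h) z
      rw [Real.norm_eq_abs] at h3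
      exact le_of_lt (lt_of_le_of_lt h3 hg')
    calc |FF p x - g x| = |1 - uu x| * |p.eval (uu x) - g x * (1 + x)| := by
          rw [hfact, abs_mul]
      _ ≤ 1 * (ε / 4) := mul_le_mul habs hbd (abs_nonneg _) zero_le_one
      _ = ε / 4 := one_mul _
  -- Step 4: assemble.
  refine ⟨(memFF p).toLp (FF p), FF_toLp_mem p, ?_⟩
  have hfg : dist f (gmem.toLp g) ≤ ε / 4 := by
    rw [dist_eq_norm, Lp.norm_def]
    have hcongr : eLpNorm (⇑(f - gmem.toLp g)) 2 (volume.restrict (Set.Ioo (0:ℝ) 1)) =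
        eLpNorm ((f : ℝ → ℝ) - ⇑g) 2 (volume.restrict (Set.Ioo (0:ℝ) 1)) := by
      apply eLpNorm_congr_ae
      exact (Lp.coeFn_sub f (gmem.toLp g)).trans
        (Filter.EventuallyEq.sub Filter.EventuallyEq.rfl gmem.coeFn_toLp)
    rw [hcongr]
    calc (eLpNorm ((f : ℝ → ℝ) - ⇑g) 2 (volume.restrict (Set.Ioo (0:ℝ) 1))).toReal
        ≤ (ENNReal.ofReal (ε / 4)).toReal := ENNReal.toReal_mono ENNReal.ofReal_ne_top hg
      _ = ε / 4 := ENNReal.toReal_ofReal (by linarith)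
  have hgb : dist (gmem.toLp g) ((memFF p).toLp (FF p)) ≤ ε / 4 := by
    rw [dist_eq_norm, ← MemLp.toLp_sub gmem (memFF p)]
    have hbound := Lp.norm_le_of_ae_bound (f := (gmem.sub (memFF p)).toLp ((g : ℝ → ℝ) - FF p))
      (C := ε / 4) (by linarith) ?_
    · have hμ : measureUnivNNReal (volume.restrict (Set.Ioo (0:ℝ) 1)) = 1 := by
        simp [measureUnivNNReal, Measure.restrict_apply_univ, Real.volume_Ioo]
      rw [hμ] at hbound
      simpa using hbound
    · filter_upwards [(gmem.sub (memFF p)).coeFn_toLp, ae_restrict_mem measurableSet_Ioo]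
        with x hx1 hx2
      rw [hx1]
      simp only [Pi.sub_apply, Real.norm_eq_abs]
      rw [abs_sub_comm]
      exact key x hx2
  calc dist f ((memFF p).toLp (FF p))
      ≤ dist f (gmem.toLp g) + dist (gmem.toLp g) ((memFF p).toLp (FF p)) := dist_triangle _ _ _
    _ ≤ ε / 4 + ε / 4 := add_le_add hfg hgb
    _ < ε := by linarith
end

section
/- Let b > 1. For all integers m, n ≥ 1, the parametric Legendre exponential functions satisfy the weighted orthogonality relation ∫₀¹ b^x E_m(b; x) E_n(b; x) dx = (b−1) δ_{mn}/(b · ln b · (2n−1)). -/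
open Polynomial MeasureTheory Real Filter

/-- The parametric altered Legendre polynomial
`A_n(b; x) = ((b-1)/b) (x + 1/(b-1)) P̃_{n-1}(x)`. -/
noncomputable def alteredLegendreB (b : ℝ) (n : ℕ) (x : ℝ) : ℝ :=
  ((b - 1) / b) * (x + 1 / (b - 1)) * shiftedLegendre (n - 1) x

/-- The parametric Legendre exponential function
`E_n(b; x) = (-1)^{n-1} A_n(b; (b^{1-x} - 1)/(b-1))`. -/
noncomputable def legendreExpB (b : ℝ) (n : ℕ) (x : ℝ) : ℝ :=
  (-1) ^ (n - 1) * alteredLegendreB b n ((b ^ (1 - x) - 1) / (b - 1))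

lemma iter_deriv_factor (n : ℕ) : ∀ k ≤ n, ∃ S : Polynomial ℝ,
    derivative^[k] ((X ^ 2 - 1 : Polynomial ℝ) ^ n) = (X ^ 2 - 1) ^ (n - k) * S := by
  intro k
  induction k with
  | zero => intro _; exact ⟨1, by simp⟩
  | succ k ih =>
    intro hk
    obtain ⟨S, hS⟩ := ih (Nat.le_of_succ_le hk)
    refine ⟨(((n - k : ℕ) : Polynomial ℝ)) * (2 * X) * S + (X ^ 2 - 1) * derivative S, ?_⟩
    rw [Function.iterate_succ_apply', hS]
    have h1 : n - k = (n - (k+1)) + 1 := by omega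
    rw [h1]
    simp only [derivative_mul, derivative_pow, derivative_sub, derivative_X_pow, derivative_one,
      Nat.cast_ofNat, pow_one, C_eq_natCast, derivative_X, Nat.add_sub_cancel_left, Nat.add_sub_cancel, map_ofNat, mul_one]
    ring

lemma iter_deriv_eval_zero (n k : ℕ) (hk : k < n) (c : ℝ) (hc : c ^ 2 = 1) :
    (derivative^[k] ((X ^ 2 - 1 : Polynomial ℝ) ^ n)).eval c = 0 := by
  obtain ⟨S, hS⟩ := iter_deriv_factor n k hk.le
  rw [hS, eval_mul, eval_pow, eval_sub, eval_pow, eval_one, eval_X, hc, sub_self,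
    zero_pow (by omega), zero_mul]

lemma poly_intervalIntegrable (p : Polynomial ℝ) (a b : ℝ) :
    IntervalIntegrable (fun x => p.eval x) volume a b :=
  (p.continuous_aeval).intervalIntegrable a b

lemma poly_ibp (p q : Polynomial ℝ) (hp1 : p.eval 1 = 0) (hp2 : p.eval (-1) = 0) :
    ∫ x in (-1:ℝ)..1, (derivative p).eval x * q.eval x =
      - ∫ x in (-1:ℝ)..1, p.eval x * (derivative q).eval x := by
  have h := intervalIntegral.integral_mul_deriv_eq_deriv_mul (a := (-1:ℝ)) (b := 1)
    (u := fun x => p.eval x) (v := fun x => q.eval x)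
    (u' := fun x => (derivative p).eval x) (v' := fun x => (derivative q).eval x)
    (fun x _ => p.hasDerivAt x) (fun x _ => q.hasDerivAt x)
    (poly_intervalIntegrable _ _ _) (poly_intervalIntegrable _ _ _)
  simp only [hp1, hp2, zero_mul, sub_zero, zero_sub] at h
  linarith

lemma poly_ibp_iter (n : ℕ) : ∀ p q : Polynomial ℝ,
    (∀ k < n, (derivative^[k] p).eval 1 = 0) →
    (∀ k < n, (derivative^[k] p).eval (-1) = 0) →
    ∫ x in (-1:ℝ)..1, (derivative^[n] p).eval x * q.eval x
      = (-1 : ℝ)^n * ∫ x in (-1:ℝ)..1, p.eval x * (derivative^[n] q).eval x := by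
  induction n with
  | zero => intro p q _ _; simp
  | succ n ih =>
    intro p q h1 h2
    rw [Function.iterate_succ_apply']
    rw [poly_ibp (derivative^[n] p) q (h1 n (by omega)) (h2 n (by omega))]
    rw [ih p (derivative q) (fun k hk => h1 k (by omega)) (fun k hk => h2 k (by omega))]
    rw [← Function.iterate_succ_apply, Function.iterate_succ_apply']
    ring

lemma integral_sq_sub_one_pow (n : ℕ) :
    ∫ x in (-1:ℝ)..1, (x^2-1)^n
      = (-1:ℝ)^n * 2^(2*n+1) * (n.factorial)^2 / ((2*n+1).factorial) := by
  induction n with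
  | zero => norm_num
  | succ n ih =>
    have cont : ∀ m : ℕ, Continuous (fun x : ℝ => (x^2-1)^m) := by
      intro m; fun_prop
    have hibp := intervalIntegral.integral_mul_deriv_eq_deriv_mul (a := (-1:ℝ)) (b := 1)
      (u := fun x => x) (v := fun x => (x^2-1)^(n+1))
      (u' := fun _ => (1:ℝ)) (v' := fun x => ((n:ℝ)+1) * (x^2-1)^n * (2*x))
      (fun x _ => hasDerivAt_id x)
      (fun x _ => by
        simpa using (((hasDerivAt_pow 2 x).sub_const 1).fun_pow (n+1)))
      (continuous_const.intervalIntegrable _ _)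
      ((by fun_prop : Continuous fun x : ℝ => ((n:ℝ)+1) * (x^2-1)^n * (2*x)).intervalIntegrable _ _)
    have e1 : ∫ x in (-1:ℝ)..1, x * (((n:ℝ)+1) * (x^2-1)^n * (2*x))
        = (2*(n:ℝ)+2) * ∫ x in (-1:ℝ)..1, x^2*(x^2-1)^n := by
      rw [← intervalIntegral.integral_const_mul]
      congr 1; ext x; ring
    have e2 : ∫ x in (-1:ℝ)..1, (x^2-1)^(n+1)
        = (∫ x in (-1:ℝ)..1, x^2*(x^2-1)^n) - ∫ x in (-1:ℝ)..1, (x^2-1)^n := by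
      rw [← intervalIntegral.integral_sub
        ((by fun_prop : Continuous fun x : ℝ => x^2*(x^2-1)^n).intervalIntegrable _ _)
        ((cont n).intervalIntegrable _ _)]
      congr 1; ext x; ring
    rw [e1] at hibp
    norm_num at hibp
    -- hibp : (2*n+2) * A = - I1  (after simplification of boundary terms)
    set A := ∫ x in (-1:ℝ)..1, x^2*(x^2-1)^n with hA
    set I1 := ∫ x in (-1:ℝ)..1, (x^2-1)^(n+1) with hI1
    rw [ih] at e2
    have h23 : (2*(n:ℝ)+3) ≠ 0 := by positivity
    have hfac : (((2*(n+1)+1).factorial : ℝ))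
        = (2*(n:ℝ)+3) * (2*(n:ℝ)+2) * ((2*n+1).factorial : ℝ) := by
      have : 2*(n+1)+1 = (2*n+1) + 1 + 1 := by omega
      rw [this, Nat.factorial_succ, Nat.factorial_succ]
      push_cast; ring
    have hfacpos : (0:ℝ) < ((2*n+1).factorial : ℝ) := by positivity
    have hI1val : I1 = -(2*(n:ℝ)+2)/(2*(n:ℝ)+3)
        * ((-1:ℝ)^n * 2^(2*n+1) * (n.factorial)^2 / ((2*n+1).factorial)) := by
      have lin : (2*(n:ℝ)+2) * A = - I1 := by linarith [hibp]
      have lin2 : A = I1 + (-1:ℝ)^n * 2^(2*n+1) * (n.factorial)^2 / ((2*n+1).factorial) := by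
        linarith [e2]
      field_simp at lin2 ⊢
      nlinarith [lin, lin2]
    have hfs : ((n+1).factorial : ℝ) = ((n:ℝ)+1) * n.factorial := by
      rw [Nat.factorial_succ]; push_cast; ring
    rw [hI1val, hfac, hfs]
    field_simp
    ring

lemma Qmonic : ((X ^ 2 - 1 : Polynomial ℝ)).Monic := by
  simpa using monic_X_pow_sub_C (1:ℝ) (two_ne_zero)

lemma QnatDegree : ((X ^ 2 - 1 : Polynomial ℝ)).natDegree = 2 := by
  compute_degree!

lemma iter_deriv_top (n : ℕ) :
    derivative^[2*n] ((X ^ 2 - 1 : Polynomial ℝ) ^ n) = C (((2*n).factorial : ℝ)) := by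
  have hdeg : ((X ^ 2 - 1 : Polynomial ℝ) ^ n).natDegree = 2*n := by
    rw [natDegree_pow, QnatDegree]; ring
  have h0 : (derivative^[2*n] ((X ^ 2 - 1 : Polynomial ℝ) ^ n)).natDegree = 0 := by
    have := natDegree_iterate_derivative ((X ^ 2 - 1 : Polynomial ℝ) ^ n) (2*n)
    omega
  have := eq_C_of_natDegree_le_zero h0.le
  rw [this, coeff_iterate_derivative]
  have hlead : ((X ^ 2 - 1 : Polynomial ℝ) ^ n).coeff (2*n) = 1 := by
    have := (Qmonic.pow n).coeff_natDegree
    rwa [hdeg] at this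
  rw [zero_add, hlead, Nat.descFactorial_self]
  simp

lemma core_lt {m n : ℕ} (h : m < n) :
    ∫ x in (-1:ℝ)..1, (derivative^[m] ((X ^ 2 - 1 : Polynomial ℝ) ^ m)).eval x *
      (derivative^[n] ((X ^ 2 - 1 : Polynomial ℝ) ^ n)).eval x = 0 := by
  have comm : ∫ x in (-1:ℝ)..1, (derivative^[m] ((X ^ 2 - 1 : Polynomial ℝ) ^ m)).eval x *
      (derivative^[n] ((X ^ 2 - 1 : Polynomial ℝ) ^ n)).eval x
      = ∫ x in (-1:ℝ)..1, (derivative^[n] ((X ^ 2 - 1 : Polynomial ℝ) ^ n)).eval x *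
      (derivative^[m] ((X ^ 2 - 1 : Polynomial ℝ) ^ m)).eval x := by
    congr 1; ext x; ring
  rw [comm, poly_ibp_iter n _ _
    (fun k hk => iter_deriv_eval_zero n k hk 1 (by norm_num))
    (fun k hk => iter_deriv_eval_zero n k hk (-1) (by norm_num))]
  have hz : derivative^[n] (derivative^[m] ((X ^ 2 - 1 : Polynomial ℝ) ^ m)) = 0 := by
    rw [← Function.iterate_add_apply]
    apply iterate_derivative_eq_zero
    have : ((X ^ 2 - 1 : Polynomial ℝ) ^ m).natDegree = 2 * m := by
      rw [natDegree_pow, QnatDegree]; ring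
    omega
  rw [hz]
  simp

lemma core_diag (n : ℕ) :
    ∫ x in (-1:ℝ)..1, (derivative^[n] ((X ^ 2 - 1 : Polynomial ℝ) ^ n)).eval x *
      (derivative^[n] ((X ^ 2 - 1 : Polynomial ℝ) ^ n)).eval x
      = 2^(2*n+1) * ((n.factorial : ℝ))^2 * ((2*n).factorial) / ((2*n+1).factorial) := by
  rw [poly_ibp_iter n _ _
    (fun k hk => iter_deriv_eval_zero n k hk 1 (by norm_num))
    (fun k hk => iter_deriv_eval_zero n k hk (-1) (by norm_num))]
  have hz : derivative^[n] (derivative^[n] ((X ^ 2 - 1 : Polynomial ℝ) ^ n))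
      = C (((2*n).factorial : ℝ)) := by
    rw [← Function.iterate_add_apply, show n + n = 2*n by ring, iter_deriv_top]
  rw [hz]
  have : ∫ x in (-1:ℝ)..1, ((X ^ 2 - 1 : Polynomial ℝ) ^ n).eval x *
      (C (((2*n).factorial : ℝ))).eval x
      = ((2*n).factorial : ℝ) * ∫ x in (-1:ℝ)..1, (x^2-1)^n := by
    rw [← intervalIntegral.integral_const_mul]
    congr 1; ext x; simp; ring
  rw [this, integral_sq_sub_one_pow]
  have hsq : ((-1:ℝ))^(n*2) = 1 := by rw [pow_mul', neg_one_sq, one_pow]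
  ring_nf
  rw [hsq]
  ring

lemma legendre_mul_eval (m n : ℕ) (x : ℝ) :
    (legendre m).eval x * (legendre n).eval x
      = (1 / (2 ^ m * m.factorial) * (1 / (2 ^ n * n.factorial)))
        * ((derivative^[m] ((X ^ 2 - 1 : Polynomial ℝ) ^ m)).eval x *
           (derivative^[n] ((X ^ 2 - 1 : Polynomial ℝ) ^ n)).eval x) := by
  simp only [legendre, eval_smul, smul_eq_mul]
  ring

lemma legendre_ortho (m n : ℕ) :
    ∫ x in (-1:ℝ)..1, (legendre m).eval x * (legendre n).eval x
      = if m = n then 2 / (2*(n:ℝ)+1) else 0 := by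
  have key : ∫ x in (-1:ℝ)..1, (legendre m).eval x * (legendre n).eval x
      = (1 / (2 ^ m * m.factorial) * (1 / (2 ^ n * n.factorial)))
        * ∫ x in (-1:ℝ)..1, ((derivative^[m] ((X ^ 2 - 1 : Polynomial ℝ) ^ m)).eval x *
           (derivative^[n] ((X ^ 2 - 1 : Polynomial ℝ) ^ n)).eval x) := by
    rw [← intervalIntegral.integral_const_mul]
    congr 1; ext x; rw [legendre_mul_eval]
  rcases lt_trichotomy m n with h | h | h
  · rw [if_neg h.ne, key, core_lt h, mul_zero]
  · subst h
    rw [if_pos rfl, key, core_diag]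
    have h1 : ((2*m+1).factorial : ℝ) = (2*(m:ℝ)+1) * ((2*m).factorial : ℝ) := by
      rw [Nat.factorial_succ]; push_cast; ring
    have h2 : (0:ℝ) < (m.factorial : ℝ) := by positivity
    have h3 : (0:ℝ) < ((2*m).factorial : ℝ) := by positivity
    have h4 : (0:ℝ) < 2*(m:ℝ)+1 := by positivity
    rw [h1]
    have h5 : (2:ℝ)^(2*m+1) = 2^m * 2^m * 2 := by
      rw [pow_add, two_mul, pow_add]; ring
    rw [h5]
    field_simp
  · rw [if_neg h.ne', key]
    have comm : ∫ x in (-1:ℝ)..1, ((derivative^[m] ((X ^ 2 - 1 : Polynomial ℝ) ^ m)).eval x *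
           (derivative^[n] ((X ^ 2 - 1 : Polynomial ℝ) ^ n)).eval x)
        = ∫ x in (-1:ℝ)..1, ((derivative^[n] ((X ^ 2 - 1 : Polynomial ℝ) ^ n)).eval x *
           (derivative^[m] ((X ^ 2 - 1 : Polynomial ℝ) ^ m)).eval x) := by
      congr 1; ext x; ring
    rw [comm, core_lt h, mul_zero]

lemma shifted_ortho (m n : ℕ) :
    ∫ x in (0:ℝ)..1, shiftedLegendre m x * shiftedLegendre n x
      = if m = n then 1/(2*(n:ℝ)+1) else 0 := by
  simp only [_root_.shiftedLegendre, sub_eq_add_neg]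
  rw [intervalIntegral.integral_comp_mul_add
    (fun u => (legendre m).eval u * (legendre n).eval u) two_ne_zero (-1)]
  norm_num
  rw [legendre_ortho]
  have hne : (2*(n:ℝ)+1) ≠ 0 := by positivity
  split_ifs
  · field_simp
  · norm_num

lemma shiftedLegendre_continuous (k : ℕ) : Continuous (shiftedLegendre k) := by
  unfold _root_.shiftedLegendre
  exact (legendre k).continuous_aeval.comp (by continuity)

/-- Weighted orthogonality of the parametric Legendre exponential functions:
`∫₀¹ b^x E_m(b;x) E_n(b;x) dx = (b-1) δ_{mn}/(b ln b (2n-1))`. -/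
theorem legendreExpB_orthogonality (b : ℝ) (hb : 1 < b) (m n : ℕ) (hm : 1 ≤ m)
    (hn : 1 ≤ n) :
    ∫ x in (0:ℝ)..1, b ^ x * legendreExpB b m x * legendreExpB b n x =
      (b - 1) * (if m = n then 1 else 0) / (b * Real.log b * (2 * (n : ℝ) - 1)) := by
  have hb0 : (0:ℝ) < b := lt_trans one_pos hb
  have hb1 : b - 1 ≠ 0 := sub_ne_zero.mpr (ne_of_gt hb)
  have hlog : Real.log b ≠ 0 := ne_of_gt (Real.log_pos hb)
  set g : ℝ → ℝ := fun u => shiftedLegendre (m-1) u * shiftedLegendre (n-1) u with hg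
  set f : ℝ → ℝ := fun x => (b ^ (1-x) - 1)/(b-1) with hf
  set F : ℝ → ℝ := fun x => (b ^ (1-x) * Real.log b * (-1))/(b-1) with hF
  have hderiv : ∀ x ∈ Set.uIcc (0:ℝ) 1, HasDerivAt f (F x) x := by
    intro x _
    have h1 : HasDerivAt (fun x:ℝ => 1 - x) (-1) x := by
      simpa using (hasDerivAt_id x).const_sub 1
    have h2 : HasDerivAt (fun y:ℝ => b ^ y) (b ^ (1-x) * Real.log b) (1-x) :=
      (Real.hasStrictDerivAt_const_rpow hb0 (1-x)).hasDerivAt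
    have h3 := (h2.comp x h1).sub_const 1
    exact h3.div_const (b-1)
  have hcexp : Continuous (fun x:ℝ => b ^ (1-x)) := by
    have : (fun x:ℝ => b ^ (1-x)) = fun x => Real.exp (Real.log b * (1-x)) :=
      funext fun x => Real.rpow_def_of_pos hb0 _
    rw [this]; continuity
  have hcont : ContinuousOn F (Set.uIcc (0:ℝ) 1) := by
    apply Continuous.continuousOn
    rw [hF]; fun_prop
  have hgcont : Continuous g := by
    rw [hg]; exact (shiftedLegendre_continuous _).mul (shiftedLegendre_continuous _)
  have key : ∀ x : ℝ, b ^ x * legendreExpB b m x * legendreExpB b n x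
      = ((-1:ℝ)^(m-1) * (-1)^(n-1) * (-(b-1)/(b*Real.log b))) * (F x • (g ∘ f) x) := by
    intro x
    have hc : (0:ℝ) < b ^ ((1:ℝ)-x) := Real.rpow_pos_of_pos hb0 _
    have hbx : b ^ x * b ^ ((1:ℝ)-x) = b := by
      rw [← Real.rpow_add hb0]
      norm_num
    have hbx2 : b ^ x = b / b ^ ((1:ℝ)-x) := by
      rw [eq_div_iff (ne_of_gt hc)]
      exact hbx
    simp only [legendreExpB, alteredLegendreB, hg, hF, hf, smul_eq_mul, Function.comp]
    have harg : (b ^ ((1:ℝ)-x) - 1) / (b-1) + 1/(b-1) = b ^ ((1:ℝ)-x) / (b-1) := by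
      field_simp
      ring
    rw [harg, hbx2]
    field_simp
  have step1 : ∫ x in (0:ℝ)..1, b ^ x * legendreExpB b m x * legendreExpB b n x
      = ((-1:ℝ)^(m-1) * (-1)^(n-1) * (-(b-1)/(b*Real.log b)))
        * ∫ x in (0:ℝ)..1, F x • (g ∘ f) x := by
    rw [← intervalIntegral.integral_const_mul]
    congr 1
    ext x
    exact key x
  rw [step1, intervalIntegral.integral_comp_smul_deriv hderiv hcont hgcont]
  have hf0 : f 0 = 1 := by
    simp only [hf]
    norm_num [Real.rpow_one, div_self hb1]
  have hf1 : f 1 = 0 := by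
    simp only [hf]
    norm_num
  rw [hf0, hf1, intervalIntegral.integral_symm, hg, shifted_ortho]
  by_cases hmn : m = n
  · subst hmn
    rw [if_pos rfl, if_pos rfl]
    have hcast : ((m-1 : ℕ) : ℝ) = (m:ℝ) - 1 := by
      push_cast [Nat.cast_sub hm]; ring
    rw [hcast]
    have h2n : 2*((m:ℝ)-1)+1 = 2*(m:ℝ)-1 := by ring
    rw [h2n]
    have hne : 2*(m:ℝ)-1 ≠ 0 := by
      have : (1:ℝ) ≤ (m:ℝ) := by exact_mod_cast hm
      nlinarith
    have hsgn : ((-1:ℝ))^(m-1) * (-1)^(m-1) = 1 := by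
      rw [← pow_add, ← two_mul, pow_mul]
      norm_num
    rw [hsgn]
    field_simp
  · rw [if_neg hmn, if_neg (by omega : ¬ (m-1 = n-1))]
    simp
end
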